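/- (Menelaus' theorem for translation triangles in Sol.) Let A₀, A₁, A₂ ∈ ℝ³ be points of Sol such that Π(A₀), Π(A₁), Π(A₂) are affinely independent in ℝ², where Π(a,b,c) = (a, e^{−c}). For (i,j) ∈ {(0,1),(1,2),(2,0)} let Γ_{ij} be a Sol translation curve with parameters (θ_{ij}, φ_{ij}), sin θ_{ij} ≠ 0, with Γ_{ij}(0) = A_i and Γ_{ij}(L_{ij}) = A_j for some L_{ij} > 0. Let P = Γ₀₁(s_P), Q = Γ₁₂(s_Q), R = Γ₂₀(s_R) with s_P ∉ {0, L₀₁}, s_Q ∉ {0, L₁₂}, s_R ∉ {0, L₂₀}. If Π(P), Π(Q), Π(R) lie on a common Euclidean straight line in ℝ² which does not pass through any of Π(A₀), Π(A₁), Π(A₂), then σ(s_P, L₀₁; sin θ₀₁) · σ(s_Q, L₁₂; sin θ₁₂) · σ(s_R, L₂₀; sin θ₂₀) = −1, where σ(s, L; k) = (1 − e^{−s k})/(e^{−s k} − e^{−L k}) is the Sol simple ratio. -/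

import Mathlib

open Real

/-- The Sol translation curve starting at `S = (p,q,r)` with parameters `(θ, φ)`,
parametrized by translation arc length. -/
noncomputable def solCurve (S : ℝ × ℝ × ℝ) (θ φ : ℝ) : ℝ → ℝ × ℝ × ℝ :=
  fun t =>
    (S.1 + exp (-S.2.2) * (-(cos θ / sin θ) * cos φ * (exp (-(t * sin θ)) - 1)),
     S.2.1 + exp S.2.2 * ((cos θ / sin θ) * sin φ * (exp (t * sin θ) - 1)),
     S.2.2 + t * sin θ)

/-- The composition `Π(a,b,c) = (a, e^{−c})` of the orthogonal projection onto the
`[x,z]` plane with the map `m` to the upper half-plane. -/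
noncomputable def solProj : ℝ × ℝ × ℝ → ℝ × ℝ := fun S => (S.1, exp (-S.2.2))

/-- The Sol simple ratio `σ(s, L; k) = (1 − e^{−s·k})/(e^{−s·k} − e^{−L·k})` of the
points `Γ(0)`, `Γ(s)`, `Γ(L)` of a translation curve with `k = sin θ`. -/
noncomputable def solRatio (s L k : ℝ) : ℝ :=
  (1 - exp (-(s * k))) / (exp (-(s * k)) - exp (-(L * k)))


noncomputable def lineF (a b p : ℝ × ℝ) : ℝ :=
  (p.1 - a.1) * (b.2 - a.2) - (p.2 - a.2) * (b.1 - a.1)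

lemma mem_pair_iff {a b p : ℝ × ℝ} :
    p ∈ affineSpan ℝ {a, b} ↔ ∃ r : ℝ, r • (b - a) + a = p := by
  have h := vadd_left_mem_affineSpan_pair (k := ℝ) (p₁ := a) (p₂ := b) (v := p - a)
  simp only [vadd_eq_add, vsub_eq_sub, sub_add_cancel] at h
  rw [h]
  constructor
  · rintro ⟨r, hr⟩; exact ⟨r, by rw [hr]; abel⟩
  · rintro ⟨r, hr⟩; exact ⟨r, by rw [← hr]; abel⟩

lemma lineF_zero_of_mem {a b p : ℝ × ℝ} (h : p ∈ affineSpan ℝ {a, b}) :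
    lineF a b p = 0 := by
  rw [mem_pair_iff] at h
  obtain ⟨r, hr⟩ := h
  have h1 : p.1 = r * (b.1 - a.1) + a.1 := by rw [← hr]; rfl
  have h2 : p.2 = r * (b.2 - a.2) + a.2 := by rw [← hr]; rfl
  simp [lineF, h1, h2]; ring

lemma mem_of_lineF_zero {a b p : ℝ × ℝ} (hab : a ≠ b) (h : lineF a b p = 0) :
    p ∈ affineSpan ℝ {a, b} := by
  rw [mem_pair_iff]
  simp only [lineF] at h
  rcases eq_or_ne b.1 a.1 with h1 | h1
  · have h2 : b.2 ≠ a.2 := by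
      intro h2; exact hab (Prod.ext h1.symm h2.symm)
    refine ⟨(p.2 - a.2) / (b.2 - a.2), ?_⟩
    have hp1 : p.1 = a.1 := by
      rw [h1, sub_self, mul_zero, sub_zero, mul_eq_zero] at h
      rcases h with h | h
      · linarith [sub_eq_zero.mp h]
      · exact absurd (sub_eq_zero.mp h) h2
    apply Prod.ext
    · show (p.2 - a.2) / (b.2 - a.2) * (b.1 - a.1) + a.1 = p.1
      rw [h1, hp1]; ring
    · show (p.2 - a.2) / (b.2 - a.2) * (b.2 - a.2) + a.2 = p.2
      rw [div_mul_cancel₀ _ (sub_ne_zero.mpr h2)]; ring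
  · refine ⟨(p.1 - a.1) / (b.1 - a.1), ?_⟩
    have hb := sub_ne_zero.mpr h1
    apply Prod.ext
    · show (p.1 - a.1) / (b.1 - a.1) * (b.1 - a.1) + a.1 = p.1
      field_simp
      ring
    · show (p.1 - a.1) / (b.1 - a.1) * (b.2 - a.2) + a.2 = p.2
      field_simp
      nlinarith [h]

lemma solCurve_zero (S : ℝ × ℝ × ℝ) (θ φ : ℝ) : solCurve S θ φ 0 = S := by
  simp [solCurve]

lemma side_ratio (S : ℝ × ℝ × ℝ) (θ φ : ℝ) (hθ : sin θ ≠ 0) (L s : ℝ)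
    (hs0 : s ≠ 0) (hsL : s ≠ L) (a b : ℝ × ℝ)
    (hmid : lineF a b (solProj (solCurve S θ φ s)) = 0)
    (h0 : lineF a b (solProj (solCurve S θ φ 0)) ≠ 0)
    (h1 : lineF a b (solProj (solCurve S θ φ L)) ≠ 0) :
    solRatio s L (sin θ) =
      -(lineF a b (solProj (solCurve S θ φ 0))) /
        lineF a b (solProj (solCurve S θ φ L)) := by
  obtain ⟨α, β, key⟩ : ∃ α β : ℝ, ∀ t : ℝ,
      lineF a b (solProj (solCurve S θ φ t)) = α + β * exp (-(t * sin θ)) := by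
    refine ⟨(S.1 + exp (-S.2.2) * (cos θ / sin θ * cos φ) - a.1) * (b.2 - a.2)
        + a.2 * (b.1 - a.1),
      -(exp (-S.2.2) * (cos θ / sin θ * cos φ)) * (b.2 - a.2)
        - exp (-S.2.2) * (b.1 - a.1), fun t => ?_⟩
    simp only [lineF, solProj, solCurve]
    rw [show -(S.2.2 + t * sin θ) = -S.2.2 + -(t * sin θ) by ring, exp_add]
    ring
  simp only [key, zero_mul, neg_zero, exp_zero, mul_one] at hmid h0 h1 ⊢
  have hus : exp (-(s * sin θ)) ≠ 1 := by
    simp only [Ne, exp_eq_one_iff, neg_eq_zero, mul_eq_zero]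
    simp [hs0, hθ]
  have husL : exp (-(s * sin θ)) ≠ exp (-(L * sin θ)) := by
    simp only [Ne, exp_eq_exp, neg_inj]
    intro hc
    exact hsL (mul_right_cancel₀ hθ hc)
  have hβ : β ≠ 0 := by
    intro hβ0
    apply h0
    rw [hβ0] at hmid ⊢
    simpa using hmid
  have hα : α = -β * exp (-(s * sin θ)) := by linarith [hmid]
  rw [solRatio, hα]
  rw [hα] at h0 h1
  have hd : exp (-(s * sin θ)) - exp (-(L * sin θ)) ≠ 0 := sub_ne_zero.mpr husL
  rw [div_eq_div_iff hd h1]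
  ring

/-- **Menelaus' theorem for translation triangles in Sol.** -/
theorem sol_menelaus
    (A₀ A₁ A₂ : ℝ × ℝ × ℝ)
    (hind : AffineIndependent ℝ ![solProj A₀, solProj A₁, solProj A₂])
    (θ₀₁ φ₀₁ θ₁₂ φ₁₂ θ₂₀ φ₂₀ : ℝ)
    (hθ₀₁ : sin θ₀₁ ≠ 0) (hθ₁₂ : sin θ₁₂ ≠ 0) (hθ₂₀ : sin θ₂₀ ≠ 0)
    (L₀₁ L₁₂ L₂₀ : ℝ) (hL₀₁ : 0 < L₀₁) (hL₁₂ : 0 < L₁₂) (hL₂₀ : 0 < L₂₀)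
    (hA₁ : solCurve A₀ θ₀₁ φ₀₁ L₀₁ = A₁)
    (hA₂ : solCurve A₁ θ₁₂ φ₁₂ L₁₂ = A₂)
    (hA₀ : solCurve A₂ θ₂₀ φ₂₀ L₂₀ = A₀)
    (sP sQ sR : ℝ)
    (hsP0 : sP ≠ 0) (hsP1 : sP ≠ L₀₁) (hsQ0 : sQ ≠ 0) (hsQ1 : sQ ≠ L₁₂)
    (hsR0 : sR ≠ 0) (hsR1 : sR ≠ L₂₀)
    (P Q R : ℝ × ℝ × ℝ)
    (hP : P = solCurve A₀ θ₀₁ φ₀₁ sP)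
    (hQ : Q = solCurve A₁ θ₁₂ φ₁₂ sQ)
    (hR : R = solCurve A₂ θ₂₀ φ₂₀ sR)
    (a b : ℝ × ℝ) (hab : a ≠ b)
    (hPl : solProj P ∈ affineSpan ℝ {a, b})
    (hQl : solProj Q ∈ affineSpan ℝ {a, b})
    (hRl : solProj R ∈ affineSpan ℝ {a, b})
    (hA0l : solProj A₀ ∉ affineSpan ℝ {a, b})
    (hA1l : solProj A₁ ∉ affineSpan ℝ {a, b})
    (hA2l : solProj A₂ ∉ affineSpan ℝ {a, b}) :
    solRatio sP L₀₁ (sin θ₀₁) * solRatio sQ L₁₂ (sin θ₁₂) * solRatio sR L₂₀ (sin θ₂₀) = -1 := by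
  have h0 : lineF a b (solProj A₀) ≠ 0 := fun h => hA0l (mem_of_lineF_zero hab h)
  have h1 : lineF a b (solProj A₁) ≠ 0 := fun h => hA1l (mem_of_lineF_zero hab h)
  have h2 : lineF a b (solProj A₂) ≠ 0 := fun h => hA2l (mem_of_lineF_zero hab h)
  have e01 : solRatio sP L₀₁ (sin θ₀₁)
      = -(lineF a b (solProj A₀)) / lineF a b (solProj A₁) := by
    have := side_ratio A₀ θ₀₁ φ₀₁ hθ₀₁ L₀₁ sP hsP0 hsP1 a b
      (by rw [← hP]; exact lineF_zero_of_mem hPl)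
      (by rw [solCurve_zero]; exact h0)
      (by rw [hA₁]; exact h1)
    rwa [solCurve_zero, hA₁] at this
  have e12 : solRatio sQ L₁₂ (sin θ₁₂)
      = -(lineF a b (solProj A₁)) / lineF a b (solProj A₂) := by
    have := side_ratio A₁ θ₁₂ φ₁₂ hθ₁₂ L₁₂ sQ hsQ0 hsQ1 a b
      (by rw [← hQ]; exact lineF_zero_of_mem hQl)
      (by rw [solCurve_zero]; exact h1)
      (by rw [hA₂]; exact h2)
    rwa [solCurve_zero, hA₂] at this
  have e20 : solRatio sR L₂₀ (sin θ₂₀)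
      = -(lineF a b (solProj A₂)) / lineF a b (solProj A₀) := by
    have := side_ratio A₂ θ₂₀ φ₂₀ hθ₂₀ L₂₀ sR hsR0 hsR1 a b
      (by rw [← hR]; exact lineF_zero_of_mem hRl)
      (by rw [solCurve_zero]; exact h2)
      (by rw [hA₀]; exact h0)
    rwa [solCurve_zero, hA₀] at this
  rw [e01, e12, e20]
  field_simp
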